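/- Let X be a complete metric space and T : X → X a continuous map. Suppose there are points x, y ∈ X and ε > 0 such that x ∈ J(w) for every w in the open ball B(y, ε). Then there exists a point z ∈ B(y, ε) such that x ∈ L(z), i.e., there is a strictly increasing sequence of positive integers (kₙ) with T^{kₙ} z → x. -/

import Mathlib

open Filter Topology Set Metric

/-- The limit set `L(x)`: limits of subsequences `T^[kₙ] x` along a strictly
increasing sequence of positive integers. -/
def limitSet {X : Type*} [TopologicalSpace X] (T : X → X) (x : X) : Set X :=
  {y | ∃ k : ℕ → ℕ, StrictMono k ∧ (∀ n, 0 < k n) ∧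
    Tendsto (fun n => T^[k n] x) atTop (𝓝 y)}

/-- The extended (prolongational) limit set `J(x)`. -/
def extLimitSet {X : Type*} [TopologicalSpace X] (T : X → X) (x : X) : Set X :=
  {y | ∃ k : ℕ → ℕ, StrictMono k ∧ (∀ n, 0 < k n) ∧
    ∃ u : ℕ → X, Tendsto u atTop (𝓝 x) ∧
      Tendsto (fun n => T^[k n] (u n)) atTop (𝓝 y)}

/-- Topological transitivity. -/
def TopTransitive {X : Type*} [TopologicalSpace X] (T : X → X) : Prop :=
  ∀ U V : Set X, IsOpen U → IsOpen V → U.Nonempty → V.Nonempty →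
    ∃ n : ℕ, (T^[n] '' U ∩ V).Nonempty

lemma step_lemma {X : Type*} [MetricSpace X] (T : X → X) (hT : Continuous T)
    (x y : X) (ε : ℝ) (h : ∀ w ∈ ball y ε, x ∈ extLimitSet T w)
    (c : X) (r : ℝ) (hr : 0 < r) (hsub : closedBall c r ⊆ ball y ε)
    (N : ℕ) (δ : ℝ) (hδ : 0 < δ) :
    ∃ c' r' K, 0 < r' ∧ r' ≤ δ ∧ closedBall c' r' ⊆ closedBall c r ∧ N < K ∧
      ∀ z ∈ closedBall c' r', dist (T^[K] z) x < δ := by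
  have hc : c ∈ ball y ε := hsub (mem_closedBall_self hr.le)
  obtain ⟨k, hk, hkpos, u, hu, hux⟩ := h c hc
  -- pick a large index n
  obtain ⟨N1, hN1⟩ := (Metric.tendsto_atTop.mp hu) (r / 2) (by positivity)
  obtain ⟨N2, hN2⟩ := (Metric.tendsto_atTop.mp hux) (δ / 2) (by positivity)
  set n := max (max N1 N2) (N + 1) with hn
  have hn1 : N1 ≤ n := le_trans (le_max_left _ _) (le_max_left _ _)
  have hn2 : N2 ≤ n := le_trans (le_max_right _ _) (le_max_left _ _)
  have hnN : N + 1 ≤ n := le_max_right _ _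
  have hKN : N < k n := lt_of_lt_of_le (Nat.lt_of_lt_of_le (Nat.lt_succ_self N) hnN) hk.le_apply
  have hwc : dist (u n) c < r / 2 := hN1 n hn1
  have hTw : dist (T^[k n] (u n)) x < δ / 2 := hN2 n hn2
  -- continuity of the iterate at u n
  have hcont : ContinuousAt (T^[k n]) (u n) := (hT.iterate (k n)).continuousAt
  obtain ⟨ρ, hρ, hρ2⟩ := Metric.continuousAt_iff.mp hcont (δ / 2) (by positivity)
  refine ⟨u n, min (ρ / 2) (min (r / 2) δ), k n, by positivity, ?_, ?_, hKN, ?_⟩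
  · exact le_trans (min_le_right _ _) (min_le_right _ _)
  · intro z hz
    rw [mem_closedBall] at hz ⊢
    calc dist z c ≤ dist z (u n) + dist (u n) c := dist_triangle _ _ _
      _ ≤ r / 2 + r / 2 := by
          refine add_le_add (le_trans hz (le_trans (min_le_right _ _) (min_le_left _ _))) hwc.le
      _ = r := by ring
  · intro z hz
    rw [mem_closedBall] at hz
    have hzw : dist z (u n) < ρ := lt_of_le_of_lt (le_trans hz (min_le_left _ _)) (by linarith)
    have := hρ2 hzw
    calc dist (T^[k n] z) x ≤ dist (T^[k n] z) (T^[k n] (u n)) + dist (T^[k n] (u n)) x :=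
        dist_triangle _ _ _
      _ < δ / 2 + δ / 2 := add_lt_add this hTw
      _ = δ := by ring

theorem stmt0 {X : Type*} [MetricSpace X] [CompleteSpace X] (T : X → X)
    (hT : Continuous T) (x y : X) (ε : ℝ) (hε : 0 < ε)
    (h : ∀ w ∈ ball y ε, x ∈ extLimitSet T w) :
    ∃ z ∈ ball y ε, x ∈ limitSet T z := by
  classical
  set Inv : ℕ → X × ℝ × ℕ → Prop := fun n p =>
    0 < p.2.1 ∧ p.2.1 ≤ 1 / (n + 1) ∧ closedBall p.1 p.2.1 ⊆ ball y ε ∧ 0 < p.2.2 ∧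
      ∀ z ∈ closedBall p.1 p.2.1, dist (T^[p.2.2] z) x < 1 / (n + 1) with hInv
  have key : ∀ n (p : X × ℝ × ℕ), Inv n p → ∃ q, Inv (n + 1) q ∧
      closedBall q.1 q.2.1 ⊆ closedBall p.1 p.2.1 ∧ p.2.2 < q.2.2 := by
    intro n p hp
    obtain ⟨hr, _, hsub, hKpos, _⟩ := hp
    have hδ : (0:ℝ) < 1 / (n + 1 + 1) := by positivity
    obtain ⟨c', r', K, hr', hr'le, hsub', hKK, hball⟩ :=
      step_lemma T hT x y ε h p.1 p.2.1 hr hsub p.2.2 (1 / (n + 1 + 1)) hδ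
    refine ⟨(c', r', K), ⟨hr', ?_, hsub'.trans hsub, hKpos.trans hKK, ?_⟩, hsub', hKK⟩
    · convert hr'le using 2; push_cast; ring
    · intro z hz
      have := hball z hz
      convert this using 2
      push_cast; ring
  have base : ∃ p, Inv 0 p := by
    have hsub0 : closedBall y (ε / 2) ⊆ ball y ε := by
      intro z hz
      rw [mem_closedBall] at hz
      rw [mem_ball]
      linarith
    obtain ⟨c', r', K, hr', hr'le, hsub', hKK, hball⟩ :=
      step_lemma T hT x y ε h y (ε / 2) (by positivity) hsub0 0 1 one_pos
    refine ⟨(c', r', K), hr', by norm_num [hr'le], hsub'.trans hsub0, hKK, ?_⟩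
    intro z hz
    have := hball z hz
    simpa using this
  obtain ⟨p0, hp0⟩ := base
  choose F hF1 hF2 hF3 using key
  let f : ∀ n, {p : X × ℝ × ℕ // Inv n p} := fun n =>
    Nat.rec ⟨p0, hp0⟩ (fun n q => ⟨F n q.1 q.2, hF1 n q.1 q.2⟩) n
  set c : ℕ → X := fun n => (f n).1.1 with hc
  set r : ℕ → ℝ := fun n => (f n).1.2.1 with hrdef
  set k : ℕ → ℕ := fun n => (f n).1.2.2 with hkdef
  have hInvn : ∀ n, Inv n (c n, r n, k n) := fun n => (f n).2
  have hnest : ∀ n, closedBall (c (n+1)) (r (n+1)) ⊆ closedBall (c n) (r n) :=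
    fun n => hF2 n (f n).1 (f n).2
  have hkmono : ∀ n, k n < k (n+1) := fun n => hF3 n (f n).1 (f n).2
  have hrpos : ∀ n, 0 < r n := fun n => (hInvn n).1
  have hrle : ∀ n, r n ≤ 1 / (n + 1) := fun n => (hInvn n).2.1
  have hchain : ∀ m n, m ≤ n → closedBall (c n) (r n) ⊆ closedBall (c m) (r m) := by
    intro m n hmn
    induction n, hmn using Nat.le_induction with
    | base => exact subset_rfl
    | succ n hmn ih => exact (hnest n).trans ih
  have hcmem : ∀ m n, m ≤ n → c n ∈ closedBall (c m) (r m) := fun m n hmn =>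
    hchain m n hmn (mem_closedBall_self (hrpos n).le)
  have hcauchy : CauchySeq c := by
    rw [Metric.cauchySeq_iff']
    intro ε' hε'
    obtain ⟨N, hN⟩ := exists_nat_one_div_lt hε'
    refine ⟨N, fun n hn => ?_⟩
    have := hcmem N n hn
    rw [mem_closedBall] at this
    exact lt_of_le_of_lt (this.trans (hrle N)) hN
  obtain ⟨z, hz⟩ := cauchySeq_tendsto_of_complete hcauchy
  have hzmem : ∀ m, z ∈ closedBall (c m) (r m) := by
    intro m
    refine Metric.isClosed_closedBall.mem_of_tendsto hz ?_
    filter_upwards [eventually_ge_atTop m] with n hn using hcmem m n hn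
  refine ⟨z, (hInvn 0).2.2.1 (hzmem 0), k, strictMono_nat_of_lt_succ hkmono,
    fun n => (hInvn n).2.2.2.1, ?_⟩
  rw [tendsto_iff_dist_tendsto_zero]
  refine squeeze_zero (fun n => dist_nonneg) (fun n => ?_) tendsto_one_div_add_atTop_nhds_zero_nat
  exact ((hInvn n).2.2.2.2 z (hzmem n)).le
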